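/- Fix integers n > k ≥ 1, a real λ, and a real a > 0. The smooth function x ↦ Θ_{n,k}(λ;x) satisfies, for every x ∈ ℝ, the homogeneous linear ordinary differential equation d^k/dx^k Θ_{n,k}(λ;x) = Σ_{m=0}^{k−1} r_m^{n,k}·d^m/dx^m Θ_{n,k}(λ;x). -/

import Mathlib

/-- `f_{n,ℓ}(y;x)`: the density at `y` of the `ℓ`-th order statistic of `n` i.i.d.
unit-rate exponential random variables conditioned to exceed `x`. -/
noncomputable def amsDensity (n ℓ : ℕ) (x y : ℝ) : ℝ :=
  (ℓ : ℝ) * (n.choose ℓ) * (1 - Real.exp (-(y - x))) ^ (ℓ - 1) *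
    Real.exp (-((n : ℝ) - ℓ + 1) * (y - x))

/-- `F_{n,ℓ}(a;x)`, with the convention `F_{n,0}(a;x) = 1`. -/
noncomputable def amsCDF (n ℓ : ℕ) (a x : ℝ) : ℝ :=
  if ℓ = 0 then 1 else ∫ u in (0 : ℝ)..(a - x), amsDensity n ℓ 0 u

/-- `Θ_{n,k}(λ;x) = Σ_{ℓ=0}^{k−1} (1−ℓ/n)^{nλ}·(F_{n,ℓ}(a;x) − F_{n,ℓ+1}(a;x))`. -/
noncomputable def amsTheta (n k : ℕ) (a l x : ℝ) : ℝ :=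
  ∑ ℓ ∈ Finset.range k, (1 - (ℓ : ℝ) / n) ^ ((n : ℝ) * l) *
    (amsCDF n ℓ a x - amsCDF n (ℓ + 1) a x)

/-- The smooth function `x ↦ Θ_{n,k}(λ;x)` satisfies the homogeneous linear ODE
`(d^k/dx^k)Θ = Σ_{m<k} r_m^{n,k}·(d^m/dx^m)Θ` on all of `ℝ`, with the coefficients
`r_m^{n,k}` determined by `ν^k − Σ r_m ν^m = (ν−n)⋯(ν−n+k−1)`. -/

noncomputable def amsPsi (n ℓ : ℕ) (u : ℝ) : ℝ :=
  (n.choose ℓ : ℝ) * (1 - Real.exp (-u)) ^ ℓ * Real.exp (-((n:ℝ) - ℓ) * u)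

lemma hasDerivAt_amsPsi (n ℓ : ℕ) (hℓ : ℓ < n) (u : ℝ) :
    HasDerivAt (amsPsi n ℓ) (amsDensity n ℓ 0 u - amsDensity n (ℓ+1) 0 u) u := by
  have he : HasDerivAt (fun u : ℝ => Real.exp (-u)) (-Real.exp (-u)) u := by
    simpa using (hasDerivAt_id u).neg.exp
  have hp : HasDerivAt (fun u : ℝ => (1 - Real.exp (-u)) ^ ℓ)
      ((ℓ : ℝ) * (1 - Real.exp (-u)) ^ (ℓ - 1) * Real.exp (-u)) u := by
    have := ((hasDerivAt_const u (1:ℝ)).fun_sub he).fun_pow ℓ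
    simpa using this
  have hq : HasDerivAt (fun u : ℝ => Real.exp (-((n:ℝ) - ℓ) * u))
      (Real.exp (-((n:ℝ) - ℓ) * u) * (-((n:ℝ) - ℓ))) u := by
    simpa using ((hasDerivAt_id u).const_mul (-((n:ℝ) - ℓ))).exp
  have h := ((hp.mul hq).const_mul ((n.choose ℓ : ℝ)))
  have key : (n.choose ℓ : ℝ) *
      ((ℓ : ℝ) * (1 - Real.exp (-u)) ^ (ℓ - 1) * Real.exp (-u) * Real.exp (-((n:ℝ) - ℓ) * u)
        + (1 - Real.exp (-u)) ^ ℓ * (Real.exp (-((n:ℝ) - ℓ) * u) * (-((n:ℝ) - ℓ))))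
      = amsDensity n ℓ 0 u - amsDensity n (ℓ+1) 0 u := by
    have hchoose : ((ℓ:ℝ) + 1) * (n.choose (ℓ+1) : ℝ) = ((n:ℝ) - ℓ) * (n.choose ℓ : ℝ) := by
      have := Nat.choose_succ_right_eq n ℓ
      have hsub : ((n - ℓ : ℕ) : ℝ) = (n:ℝ) - ℓ := by
        rw [Nat.cast_sub hℓ.le]
      calc ((ℓ:ℝ) + 1) * (n.choose (ℓ+1) : ℝ) = ((n.choose (ℓ+1) * (ℓ+1) : ℕ) : ℝ) := by
            push_cast; ring
        _ = ((n.choose ℓ * (n - ℓ) : ℕ) : ℝ) := by rw [this]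
        _ = ((n:ℝ) - ℓ) * (n.choose ℓ : ℝ) := by push_cast [Nat.cast_sub hℓ.le]; ring
    have hexp : Real.exp (-u) * Real.exp (-((n:ℝ) - ℓ) * u)
        = Real.exp (-((n:ℝ) - ℓ + 1) * u) := by
      rw [← Real.exp_add]; ring_nf
    simp only [amsDensity, sub_zero]
    have hsucc : ((ℓ+1 : ℕ) : ℝ) = (ℓ:ℝ) + 1 := by push_cast; ring
    have hcast : ((n:ℝ) - ((ℓ:ℕ)+1 : ℕ) + 1) = (n:ℝ) - ℓ := by push_cast; ring
    rw [show (ℓ + 1 - 1 : ℕ) = ℓ from rfl]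
    push_cast
    rw [show ((n:ℝ) - ((ℓ:ℝ)+1) + 1) = (n:ℝ) - ℓ by ring]
    rw [← hexp]
    linear_combination ((1 - Real.exp (-u)) ^ ℓ * Real.exp (-((n:ℝ) - ℓ) * u)) * hchoose
  rw [← key]
  have hfun : amsPsi n ℓ = fun y : ℝ =>
      (n.choose ℓ : ℝ) * ((1 - Real.exp (-y)) ^ ℓ * Real.exp (-((n:ℝ) - ℓ) * y)) := by
    funext y; unfold amsPsi; ring
  rw [hfun]
  exact h

lemma amsDensity_continuous (n ℓ : ℕ) : Continuous (amsDensity n ℓ 0) := by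
  unfold amsDensity
  fun_prop

lemma amsCDF_diff (n ℓ : ℕ) (hℓ : ℓ < n) (a x : ℝ) :
    amsCDF n ℓ a x - amsCDF n (ℓ+1) a x = amsPsi n ℓ (a - x) := by
  have hint : ∀ j : ℕ, IntervalIntegrable (amsDensity n j 0) MeasureTheory.volume 0 (a - x) :=
    fun j => (amsDensity_continuous n j).intervalIntegrable 0 (a - x)
  have hftc : (∫ u in (0:ℝ)..(a - x), (amsDensity n ℓ 0 u - amsDensity n (ℓ+1) 0 u))
      = amsPsi n ℓ (a - x) - amsPsi n ℓ 0 :=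
    intervalIntegral.integral_eq_sub_of_hasDerivAt
      (fun u _ => hasDerivAt_amsPsi n ℓ hℓ u) ((hint ℓ).sub (hint (ℓ+1)))
  rw [intervalIntegral.integral_sub (hint ℓ) (hint (ℓ+1))] at hftc
  cases ℓ with
  | zero =>
    have h0 : (∫ u in (0:ℝ)..(a - x), amsDensity n 0 0 u) = 0 := by
      simp [amsDensity]
    have hpsi0 : amsPsi n 0 0 = 1 := by simp [amsPsi]
    rw [h0, hpsi0] at hftc
    simp only [amsCDF]
    norm_num
    linarith
  | succ j =>
    have hpsi0 : amsPsi n (j+1) 0 = 0 := by simp [amsPsi]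
    rw [hpsi0] at hftc
    simp only [amsCDF, if_neg (Nat.succ_ne_zero j), if_neg (Nat.succ_ne_zero (j+1))]
    linarith

lemma amsPsi_expand (n ℓ : ℕ) (t : ℝ) :
    amsPsi n ℓ t = ∑ i ∈ Finset.range (ℓ+1),
      ((n.choose ℓ : ℝ) * (ℓ.choose i) * (-1)^(ℓ-i)) * Real.exp (-((n:ℝ) - i) * t) := by
  unfold amsPsi
  rw [sub_eq_add_neg, add_pow]
  rw [Finset.mul_sum, Finset.sum_mul]
  refine Finset.sum_congr rfl fun i hi => ?_
  have hi' : i ≤ ℓ := Nat.lt_succ_iff.mp (Finset.mem_range.mp hi)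
  have h1 : (-Real.exp (-t)) ^ (ℓ - i) = (-1 : ℝ) ^ (ℓ - i) * Real.exp ((ℓ - i : ℕ) * (-t)) := by
    rw [neg_pow, Real.exp_nat_mul]
  rw [h1]
  have h2 : Real.exp (((ℓ - i : ℕ) : ℝ) * (-t)) * Real.exp (-((n:ℝ) - ℓ) * t)
      = Real.exp (-((n:ℝ) - i) * t) := by
    rw [← Real.exp_add]
    congr 1
    push_cast [Nat.cast_sub hi']
    ring
  rw [← h2]
  ring


lemma theta_as_expsum (n k : ℕ) (hkn : k < n) (a l : ℝ) :
    ∃ B : ℕ → ℝ, ∀ x : ℝ, amsTheta n k a l x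
      = ∑ i ∈ Finset.range k, B i * Real.exp (((n:ℝ) - i) * x) := by
  set D : ℕ → ℕ → ℝ := fun ℓ i =>
    (1 - (ℓ:ℝ)/n) ^ ((n:ℝ)*l) * ((n.choose ℓ : ℝ) * (ℓ.choose i) * (-1)^(ℓ-i)) *
      Real.exp (-((n:ℝ) - i) * a) with hD
  refine ⟨fun i => ∑ ℓ ∈ Finset.range k, if i ≤ ℓ then D ℓ i else 0, fun x => ?_⟩
  unfold amsTheta
  have step1 : ∀ ℓ ∈ Finset.range k,
      (1 - (ℓ : ℝ) / n) ^ ((n : ℝ) * l) * (amsCDF n ℓ a x - amsCDF n (ℓ + 1) a x)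
      = ∑ i ∈ Finset.range k, (if i ≤ ℓ then D ℓ i * Real.exp (((n:ℝ) - i) * x) else 0) := by
    intro ℓ hℓ
    have hℓk : ℓ < k := Finset.mem_range.mp hℓ
    rw [amsCDF_diff n ℓ (hℓk.trans hkn) a x, amsPsi_expand, Finset.mul_sum]
    have hfil : (Finset.range k).filter (· ≤ ℓ) = Finset.range (ℓ+1) := by
      ext i
      simp only [Finset.mem_filter, Finset.mem_range, Nat.lt_succ_iff]
      exact ⟨fun h => h.2, fun h => ⟨lt_of_le_of_lt h hℓk, h⟩⟩
    have : ∀ i ∈ Finset.range k, (if i ≤ ℓ then D ℓ i * Real.exp (((n:ℝ) - i) * x) else 0)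
        = if i ≤ ℓ then (1 - (ℓ:ℝ)/n) ^ ((n:ℝ)*l) *
            (((n.choose ℓ : ℝ) * (ℓ.choose i) * (-1)^(ℓ-i)) * Real.exp (-((n:ℝ) - i) * (a - x)))
          else 0 := by
      intro i _
      by_cases h : i ≤ ℓ
      · simp only [if_pos h, hD]
        have hexp : Real.exp (-((n:ℝ)-i)*(a-x))
            = Real.exp (-((n:ℝ)-i)*a) * Real.exp (((n:ℝ)-i)*x) := by
          rw [← Real.exp_add]; ring_nf
        rw [hexp]; ring
      · simp [h]
    rw [Finset.sum_congr rfl this, ← Finset.sum_filter, hfil]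
  rw [Finset.sum_congr rfl step1, Finset.sum_comm]
  refine Finset.sum_congr rfl fun i _ => ?_
  rw [Finset.sum_mul]
  refine Finset.sum_congr rfl fun ℓ _ => ?_
  rw [ite_mul, zero_mul]

lemma sumexp_hasDerivAt (k : ℕ) (B c : ℕ → ℝ) (m : ℕ) (x : ℝ) :
    HasDerivAt (fun x => ∑ i ∈ Finset.range k, B i * c i ^ m * Real.exp (c i * x))
      (∑ i ∈ Finset.range k, B i * c i ^ (m+1) * Real.exp (c i * x)) x := by
  apply HasDerivAt.fun_sum
  intro i _
  have h : HasDerivAt (fun x => Real.exp (c i * x)) (Real.exp (c i * x) * c i) x := by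
    simpa using ((hasDerivAt_id x).const_mul (c i)).exp
  have := h.const_mul (B i * c i ^ m)
  convert this using 1
  · rfl
  ring

lemma iteratedDeriv_sumexp (k : ℕ) (B c : ℕ → ℝ) (m : ℕ) :
    iteratedDeriv m (fun x => ∑ i ∈ Finset.range k, B i * Real.exp (c i * x)) =
      fun x => ∑ i ∈ Finset.range k, B i * c i ^ m * Real.exp (c i * x) := by
  induction m with
  | zero => simp
  | succ m ih =>
    rw [iteratedDeriv_succ, ih]
    funext x
    exact (sumexp_hasDerivAt k B c m x).deriv

lemma ode_of_sumexp (k : ℕ) (B c r : ℕ → ℝ)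
    (hroot : ∀ i ∈ Finset.range k, c i ^ k = ∑ m ∈ Finset.range k, r m * c i ^ m)
    (f : ℝ → ℝ)
    (hf : ∀ m, iteratedDeriv m f = fun x => ∑ i ∈ Finset.range k, B i * c i ^ m * Real.exp (c i * x))
    (x : ℝ) :
    iteratedDeriv k f x = ∑ m ∈ Finset.range k, r m * iteratedDeriv m f x := by
  have h1 : iteratedDeriv k f x = ∑ i ∈ Finset.range k, B i * c i ^ k * Real.exp (c i * x) := by
    rw [hf k]
  rw [h1]
  have h2 : ∀ m ∈ Finset.range k, r m * iteratedDeriv m f x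
      = ∑ i ∈ Finset.range k, r m * (B i * c i ^ m * Real.exp (c i * x)) := by
    intro m _
    rw [hf m, Finset.mul_sum]
  rw [Finset.sum_congr rfl h2, Finset.sum_comm]
  refine Finset.sum_congr rfl fun i hi => ?_
  rw [hroot i hi]
  rw [Finset.mul_sum, Finset.sum_mul]
  exact Finset.sum_congr rfl fun m _ => by ring

theorem theta_solves_homogeneous_ODE (n k : ℕ) (hk : 1 ≤ k) (hkn : k < n)
    (l a : ℝ) (ha : 0 < a) (r : ℕ → ℝ)
    (hr : ∀ ν : ℝ, ν ^ k - ∑ m ∈ Finset.range k, r m * ν ^ m =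
      ∏ i ∈ Finset.range k, (ν - n + i)) :
    ∀ x : ℝ,
      iteratedDeriv k (fun x' => amsTheta n k a l x') x =
        ∑ m ∈ Finset.range k, r m * iteratedDeriv m (fun x' => amsTheta n k a l x') x := by
  obtain ⟨B, hB⟩ := theta_as_expsum n k hkn a l
  have hfun : (fun x' => amsTheta n k a l x')
      = fun x => ∑ i ∈ Finset.range k, B i * Real.exp (((n:ℝ) - i) * x) := funext hB
  have hroot : ∀ i ∈ Finset.range k,
      ((n:ℝ) - i) ^ k = ∑ m ∈ Finset.range k, r m * ((n:ℝ) - i) ^ m := by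
    intro i hi
    have h := hr ((n:ℝ) - i)
    have hz : ∏ j ∈ Finset.range k, (((n:ℝ) - i) - n + j) = 0 :=
      Finset.prod_eq_zero hi (by push_cast; ring)
    rw [hz] at h
    linarith
  intro x
  exact ode_of_sumexp k B (fun i => (n:ℝ) - i) r hroot _
    (fun m => by rw [hfun, iteratedDeriv_sumexp]) x
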